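/- Let ℓ = 2^k · ℓ' with ℓ' odd and k = v_2(ℓ) ≥ 3, and let χ be the Dirichlet character of modulus 8 with χ(1) = χ(7) = 1 and χ(3) = χ(5) = -1. Define σ_ℓ(n) = Σ_{i ∈ (ℤ/ℓℤ)^×} χ(i) ζ_ℓ^{ni}. Then σ_ℓ(n) = 0 if v_2(n) ≠ k - 3, and if n = 2^{k-3} n' with n' odd, then σ_ℓ(n) = χ(ℓ'n') · 2^{k-2} · √2 · c_{ℓ'}(n'), where c_{ℓ'}(n') is the Ramanujan sum. -/

import Mathlib

open Complex Finset

/-- The real Dirichlet character of modulus 8, with `χ(1)=χ(7)=1`, `χ(3)=χ(5)=-1`,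
and `χ(i)=0` for even `i`. -/
def chi8 (i : ℕ) : ℤ :=
  if i % 8 = 1 ∨ i % 8 = 7 then 1 else if i % 8 = 3 ∨ i % 8 = 5 then -1 else 0

/-- Ramanujan sum: `c_ℓ(n) = ∑_{i ∈ (ℤ/ℓℤ)ˣ} ζ_ℓ^{ni}`. -/
noncomputable def ramanujanSum (ℓ n : ℕ) [NeZero ℓ] : ℂ :=
  ∑ i : (ZMod ℓ)ˣ, Complex.exp (2 * Real.pi * Complex.I * n * ((i : ZMod ℓ).val) / ℓ)

/-- The twisted sum `σ_ℓ(n) = ∑_{i ∈ (ℤ/ℓℤ)ˣ} χ(i) ζ_ℓ^{ni}`. -/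
noncomputable def sigmaSum (ℓ n : ℕ) [NeZero ℓ] : ℂ :=
  ∑ i : (ZMod ℓ)ˣ, (chi8 ((i : ZMod ℓ).val) : ℂ) *
    Complex.exp (2 * Real.pi * Complex.I * n * ((i : ZMod ℓ).val) / ℓ)


lemma chi8_mod (j : ℕ) : chi8 (j % 8) = chi8 j := by
  simp [chi8, Nat.mod_mod_of_dvd]

lemma chi8_mul (a b : ℕ) : chi8 (a * b) = chi8 a * chi8 b := by
  rw [← chi8_mod (a*b), ← chi8_mod a, ← chi8_mod b, Nat.mul_mod]
  rw [chi8_mod (a % 8 * (b % 8))]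
  have ha : a % 8 < 8 := Nat.mod_lt _ (by norm_num)
  have hb : b % 8 < 8 := Nat.mod_lt _ (by norm_num)
  interval_cases h : a % 8 <;> interval_cases h' : b % 8 <;> decide

lemma chi8_even {j : ℕ} (h : j % 2 = 0) : chi8 j = 0 := by
  have : j % 8 = 0 ∨ j % 8 = 2 ∨ j % 8 = 4 ∨ j % 8 = 6 := by omega
  unfold chi8
  rcases this with h | h | h | h <;> simp [h]

lemma bridge (N n : ℕ) [NeZero N] (x : ZMod N) :
    Complex.exp (2 * Real.pi * Complex.I * n * x.val / N) =
      ZMod.stdAddChar ((n : ZMod N) * x) := by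
  have : ((n : ZMod N) * x) = (((n * x.val : ℕ) : ℤ) : ZMod N) := by
    push_cast [ZMod.natCast_val, ZMod.cast_id]
    ring
  rw [this, ZMod.stdAddChar_coe]
  push_cast
  ring_nf

lemma sum_zmod_eq_sum_range (N : ℕ) [NeZero N] (f : ℕ → ℂ) :
    ∑ x : ZMod N, f x.val = ∑ j ∈ range N, f j := by
  refine Finset.sum_nbij' (fun x => x.val) (fun j => (j : ZMod N)) ?_ ?_ ?_ ?_ ?_ <;>
    intros <;>
    simp_all [ZMod.val_lt, ZMod.val_cast_of_lt, ZMod.natCast_zmod_val, Nat.mod_eq_of_lt]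

-- x = x.val • 1 trick
lemma eq_val_smul (N : ℕ) [NeZero N] (x : ZMod N) : x = x.val • (1 : ZMod N) := by
  rw [nsmul_eq_mul, mul_one, ZMod.natCast_zmod_val]



lemma crt_one (a b : ℕ) [NeZero a] [NeZero b] (h : Nat.Coprime a b) :
    (((b : ZMod a)⁻¹.val * b + (a : ZMod b)⁻¹.val * a : ℕ) : ZMod (a * b)) = 1 := by
  haveI : NeZero (a * b) := ⟨Nat.mul_ne_zero (NeZero.ne a) (NeZero.ne b)⟩
  apply (ZMod.chineseRemainder h).injective
  rw [map_one]
  have h1 : (ZMod.chineseRemainder h) (((b : ZMod a)⁻¹.val * b + (a : ZMod b)⁻¹.val * a : ℕ)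
      : ZMod (a * b)) = ((((b : ZMod a)⁻¹.val * b + (a : ZMod b)⁻¹.val * a : ℕ) : ZMod a),
        (((b : ZMod a)⁻¹.val * b + (a : ZMod b)⁻¹.val * a : ℕ) : ZMod b)) := by
    exact map_natCast (ZMod.chineseRemainder h).toRingHom _
  rw [h1, Prod.ext_iff]
  constructor
  · push_cast
    simp only [ZMod.natCast_self, mul_zero, add_zero, ZMod.natCast_val, ZMod.cast_id]
    rw [mul_comm]
    exact ZMod.mul_inv_of_unit _ ((ZMod.isUnit_iff_coprime b a).mpr h.symm)
  · push_cast
    simp only [ZMod.natCast_self, mul_zero, zero_add, ZMod.natCast_val, ZMod.cast_id]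
    rw [mul_comm]
    exact ZMod.mul_inv_of_unit _ ((ZMod.isUnit_iff_coprime a b).mpr h)

lemma crt_char (a b : ℕ) [NeZero a] [NeZero b] (h : Nat.Coprime a b)
    (x : ZMod (a * b)) [NeZero (a * b)] :
    ZMod.stdAddChar x =
      ZMod.stdAddChar ((b : ZMod a)⁻¹ * (x.val : ZMod a)) *
        ZMod.stdAddChar ((a : ZMod b)⁻¹ * (x.val : ZMod b)) := by
  have base : ZMod.stdAddChar (1 : ZMod (a*b)) =
      ZMod.stdAddChar ((b : ZMod a)⁻¹) * ZMod.stdAddChar ((a : ZMod b)⁻¹) := by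
    set B := (b : ZMod a)⁻¹.val with hB
    set A := (a : ZMod b)⁻¹.val with hA
    have e1 : ZMod.stdAddChar ((b : ZMod a)⁻¹) = Complex.exp (2 * Real.pi * Complex.I * B / a) := by
      rw [show ((b : ZMod a)⁻¹ : ZMod a) = ((B : ℤ) : ZMod a) by
        push_cast [hB, ZMod.natCast_val, ZMod.cast_id]; rfl, ZMod.stdAddChar_coe]
      push_cast; ring_nf
    have e2 : ZMod.stdAddChar ((a : ZMod b)⁻¹) = Complex.exp (2 * Real.pi * Complex.I * A / b) := by
      rw [show ((a : ZMod b)⁻¹ : ZMod b) = ((A : ℤ) : ZMod b) by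
        push_cast [hA, ZMod.natCast_val, ZMod.cast_id]; rfl, ZMod.stdAddChar_coe]
      push_cast; ring_nf
    have e3 : ZMod.stdAddChar (1 : ZMod (a*b)) =
        Complex.exp (2 * Real.pi * Complex.I * ((B * b + A * a : ℕ)) / (a*b)) := by
      rw [← crt_one a b h, show (((B * b + A * a : ℕ)) : ZMod (a*b)) = (((B * b + A * a : ℕ) : ℤ) : ZMod (a*b)) by push_cast; ring,
        ZMod.stdAddChar_coe]
      push_cast; ring_nf
    rw [e1, e2, e3, ← Complex.exp_add]
    congr 1
    have ha : (a : ℂ) ≠ 0 := Nat.cast_ne_zero.mpr (NeZero.ne a)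
    have hb : (b : ℂ) ≠ 0 := Nat.cast_ne_zero.mpr (NeZero.ne b)
    push_cast
    field_simp
  calc ZMod.stdAddChar x = ZMod.stdAddChar (x.val • (1 : ZMod (a*b))) := by rw [← eq_val_smul]
    _ = (ZMod.stdAddChar (1 : ZMod (a*b)))^x.val := AddChar.map_nsmul_eq_pow _ _ _
    _ = (ZMod.stdAddChar ((b : ZMod a)⁻¹) * ZMod.stdAddChar ((a : ZMod b)⁻¹))^x.val := by rw [base]
    _ = _ := by
        rw [mul_pow, ← AddChar.map_nsmul_eq_pow, ← AddChar.map_nsmul_eq_pow]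
        congr 1 <;> · congr 1; rw [nsmul_eq_mul, mul_comm]

lemma crt_apply (a b : ℕ) [NeZero a] [NeZero b] (h : Nat.Coprime a b) (x : ZMod (a * b)) :
    ZMod.chineseRemainder h x = ((x.val : ZMod a), (x.val : ZMod b)) := by
  haveI : NeZero (a * b) := ⟨Nat.mul_ne_zero (NeZero.ne a) (NeZero.ne b)⟩
  conv_lhs => rw [← ZMod.natCast_zmod_val x]
  rw [show ((ZMod.chineseRemainder h) (x.val : ZMod (a*b))) =
    (ZMod.chineseRemainder h).toRingHom (x.val : ZMod (a*b)) from rfl, map_natCast]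
  rfl

lemma sigma_factor (N M : ℕ) [NeZero N] [NeZero M] (h8 : 8 ∣ N) (h : Nat.Coprime N M)
    [NeZero (N * M)] (n : ℕ) :
    sigmaSum (N * M) n =
      (∑ u : (ZMod N)ˣ, (chi8 ((u : ZMod N).val) : ℂ) *
          ZMod.stdAddChar ((M : ZMod N)⁻¹ * (n : ZMod N) * (u : ZMod N))) *
        (∑ v : (ZMod M)ˣ, ZMod.stdAddChar ((N : ZMod M)⁻¹ * (n : ZMod M) * (v : ZMod M))) := by
  haveI : NeZero (N * M) := ‹_›
  rw [sigmaSum]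
  simp only [bridge]
  have rhs_eq : (∑ u : (ZMod N)ˣ, (chi8 ((u : ZMod N).val) : ℂ) *
          ZMod.stdAddChar ((M : ZMod N)⁻¹ * (n : ZMod N) * (u : ZMod N))) *
        (∑ v : (ZMod M)ˣ, ZMod.stdAddChar ((N : ZMod M)⁻¹ * (n : ZMod M) * (v : ZMod M))) =
      ∑ p : (ZMod N)ˣ × (ZMod M)ˣ, (chi8 ((p.1 : ZMod N).val) : ℂ) *
          ZMod.stdAddChar ((M : ZMod N)⁻¹ * (n : ZMod N) * (p.1 : ZMod N)) *
          ZMod.stdAddChar ((N : ZMod M)⁻¹ * (n : ZMod M) * (p.2 : ZMod M)) := by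
    rw [Fintype.sum_prod_type]
    exact Finset.sum_mul_sum _ _ _ _
  rw [rhs_eq]
  set ε : (ZMod (N * M))ˣ ≃* (ZMod N)ˣ × (ZMod M)ˣ :=
    (Units.mapEquiv (ZMod.chineseRemainder h).toMulEquiv).trans MulEquiv.prodUnits with hε
  refine Fintype.sum_equiv ε.toEquiv _ _ fun i => ?_
  have key : ((((ε i).1 : ZMod N)) = (((i : ZMod (N*M)).val : ZMod N))) ∧
      ((((ε i).2 : ZMod M)) = (((i : ZMod (N*M)).val : ZMod M))) := by
    have h1 : (((ε i).1 : ZMod N), ((ε i).2 : ZMod M)) =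
        ZMod.chineseRemainder h (i : ZMod (N*M)) := by
      simp [hε, MulEquiv.prodUnits, Units.coe_map]
    rw [crt_apply N M h] at h1
    exact ⟨(Prod.ext_iff.mp h1).1, (Prod.ext_iff.mp h1).2⟩
  obtain ⟨k1, k2⟩ := key
  -- decompose the additive character
  have hnat : ∀ (K : ℕ) [NeZero K], K ∣ N * M → (((n : ZMod (N*M)).val : ZMod K)) = (n : ZMod K) := by
    intro K _ hK
    rw [ZMod.val_natCast, ← ZMod.natCast_mod n K, ← Nat.mod_mod_of_dvd n hK, ZMod.natCast_mod]
  have hx1 : (((n : ZMod (N*M)) * i : ZMod (N*M)).val : ZMod N) = (n : ZMod N) * ((ε i).1 : ZMod N) := by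
    have h2 := crt_apply N M h ((n : ZMod (N*M)) * (i : ZMod (N*M)))
    rw [map_mul, crt_apply N M h, crt_apply N M h, Prod.mk_mul_mk, Prod.mk.injEq] at h2
    rw [← h2.1, hnat N (dvd_mul_right N M), k1]
  have hx2 : (((n : ZMod (N*M)) * i : ZMod (N*M)).val : ZMod M) = (n : ZMod M) * ((ε i).2 : ZMod M) := by
    have h2 := crt_apply N M h ((n : ZMod (N*M)) * (i : ZMod (N*M)))
    rw [map_mul, crt_apply N M h, crt_apply N M h, Prod.mk_mul_mk, Prod.mk.injEq] at h2
    rw [← h2.2, hnat M (dvd_mul_left M N), k2]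
  have hchi : chi8 (((ε i).1 : ZMod N)).val = chi8 ((i : ZMod (N*M)).val) := by
    have hv : ((ε i).1 : ZMod N).val = (i : ZMod (N*M)).val % N := by rw [k1, ZMod.val_natCast]
    rw [hv, ← chi8_mod ((i : ZMod (N*M)).val % N), Nat.mod_mod_of_dvd _ h8, chi8_mod]
  rw [crt_char N M h ((n : ZMod (N*M)) * (i : ZMod (N*M))), hx1, hx2, ← hchi]
  simp only [← mul_assoc]
  rfl

lemma quad_sum (w : ℂ) : ∑ a ∈ range 8, (chi8 a : ℂ) * w ^ a = w - w^3 - w^5 + w^7 := by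
  have h0 : chi8 0 = 0 := by decide
  have h1 : chi8 1 = 1 := by decide
  have h2 : chi8 2 = 0 := by decide
  have h3 : chi8 3 = -1 := by decide
  have h4 : chi8 4 = 0 := by decide
  have h5 : chi8 5 = -1 := by decide
  have h6 : chi8 6 = 0 := by decide
  have h7 : chi8 7 = 1 := by decide
  simp [Finset.sum_range_succ, h0, h1, h2, h3, h4, h5, h6, h7]
  ring

lemma c_val : Complex.exp (2 * Real.pi * Complex.I / 8) =
    ((Real.sqrt 2 : ℝ) : ℂ) / 2 + ((Real.sqrt 2 : ℝ) : ℂ) / 2 * Complex.I := by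
  have : (2 * Real.pi * Complex.I / 8) = ((Real.pi / 4 : ℝ) : ℂ) * Complex.I := by
    push_cast; ring
  rw [this, Complex.exp_mul_I]
  rw [show Complex.cos ((Real.pi / 4 : ℝ) : ℂ) = ((Real.cos (Real.pi / 4) : ℝ) : ℂ) from
    (Complex.ofReal_cos _).symm,
    show Complex.sin ((Real.pi / 4 : ℝ) : ℂ) = ((Real.sin (Real.pi / 4) : ℝ) : ℂ) from
    (Complex.ofReal_sin _).symm, Real.cos_pi_div_four, Real.sin_pi_div_four]
  push_cast
  ring

lemma c_sq : (Complex.exp (2 * Real.pi * Complex.I / 8))^2 = Complex.I := by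
  have hs : (((Real.sqrt 2 : ℝ) : ℂ))^2 = 2 := by
    rw [show (((Real.sqrt 2 : ℝ) : ℂ))^2 = (((Real.sqrt 2 ^ 2 : ℝ) : ℂ)) by push_cast; ring,
      Real.sq_sqrt (by norm_num : (0:ℝ) ≤ 2)]
    norm_num
  rw [c_val]
  linear_combination (((Real.sqrt 2 : ℝ) : ℂ)^2/4) * Complex.I_sq + (Complex.I/2) * hs

lemma key_odd (r : ℕ) (hr : r % 2 = 1) (hr8 : r < 8) :
    (Complex.exp (2 * Real.pi * Complex.I / 8))^r
      - ((Complex.exp (2 * Real.pi * Complex.I / 8))^r)^3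
      - ((Complex.exp (2 * Real.pi * Complex.I / 8))^r)^5
      + ((Complex.exp (2 * Real.pi * Complex.I / 8))^r)^7
      = (chi8 r : ℂ) * 2 * ((Real.sqrt 2 : ℝ) : ℂ) := by
  set c := Complex.exp (2 * Real.pi * Complex.I / 8) with hcdef
  have hc := c_val
  have h2 : c^2 = Complex.I := c_sq
  have h4 : c^4 = -1 := by
    rw [show c^4 = (c^2)^2 by ring, h2, Complex.I_sq]
  have h8 : c^8 = 1 := by
    rw [show c^8 = (c^4)^2 by ring, h4]; ring
  rw [← hcdef] at hc
  interval_cases r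
  · simp at hr
  · -- r = 1
    rw [show (c^1)^3 = c^2*c by ring, show (c^1)^5 = c^4*c by ring,
      show (c^1)^7 = c^4*c^2*c by ring, h2, h4, pow_one, hc]
    rw [show chi8 1 = 1 by decide]
    push_cast
    linear_combination (-(((Real.sqrt 2:ℝ):ℂ))) * Complex.I_sq
  · simp at hr
  · -- r = 3
    rw [show (c^3)^3 = c^8*c^1 by ring, show (c^3)^5 = c^8*c^4*c^2*c by ring,
      show (c^3)^7 = c^8*c^8*c^4*c by ring, show c^3 = c^2*c by ring, h2, h4, h8, pow_one, hc]
    rw [show chi8 3 = -1 by decide]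
    push_cast
    linear_combination (((Real.sqrt 2:ℝ):ℂ)) * Complex.I_sq
  · simp at hr
  · -- r = 5
    rw [show (c^5)^3 = c^8*c^4*c^2*c by ring, show (c^5)^5 = c^8*c^8*c^8*c by ring,
      show (c^5)^7 = c^8*c^8*c^8*c^8*c^2*c by ring, show c^5 = c^4*c by ring, h2, h4, h8, hc]
    rw [show chi8 5 = -1 by decide]
    push_cast
    linear_combination (((Real.sqrt 2:ℝ):ℂ)) * Complex.I_sq
  · simp at hr
  · -- r = 7
    rw [show (c^7)^3 = c^8*c^8*c^4*c by ring, show (c^7)^5 = c^8*c^8*c^8*c^8*c^2*c by ring,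
      show (c^7)^7 = c^8*c^8*c^8*c^8*c^8*c^8*c by ring, show c^7 = c^4*c^2*c by ring,
      h2, h4, h8, hc]
    rw [show chi8 7 = 1 by decide]
    push_cast
    linear_combination (-(((Real.sqrt 2:ℝ):ℂ))) * Complex.I_sq

-- the inner geometric sum
lemma geomInner (T n : ℕ) [NeZero T] :
    ∑ b ∈ range T, Complex.exp (2 * Real.pi * Complex.I * n * b / T) =
      if T ∣ n then (T : ℂ) else 0 := by
  rw [← sum_zmod_eq_sum_range T (fun j => Complex.exp (2 * Real.pi * Complex.I * n * j / T))]
  simp only [bridge]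
  have : ∀ x : ZMod T, ZMod.stdAddChar ((n : ZMod T) * x)
      = ZMod.stdAddChar (x * (n : ZMod T)) := fun x => by rw [mul_comm]
  rw [Finset.sum_congr rfl fun x _ => this x, AddChar.sum_mulShift _ (ZMod.isPrimitive_stdAddChar T)]
  by_cases h : T ∣ n
  · rw [if_pos ((ZMod.natCast_eq_zero_iff n T).mpr h), if_pos h, ZMod.card]
  · rw [if_neg (fun hc => h ((ZMod.natCast_eq_zero_iff n T).mp hc)), if_neg h]
    simp

-- step 1: sum over units = sum over everything, for modulus 2^k
lemma units_to_full (k n : ℕ) (hk : 1 ≤ k) [NeZero (2^k)] :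
    ∑ u : (ZMod (2^k))ˣ, (chi8 ((u : ZMod (2^k)).val) : ℂ) *
        ZMod.stdAddChar ((n : ZMod (2^k)) * (u : ZMod (2^k))) =
      ∑ x : ZMod (2^k), (chi8 x.val : ℂ) * ZMod.stdAddChar ((n : ZMod (2^k)) * x) := by
  classical
  rw [show (∑ u : (ZMod (2^k))ˣ, (chi8 ((u : ZMod (2^k)).val) : ℂ) *
        ZMod.stdAddChar ((n : ZMod (2^k)) * (u : ZMod (2^k)))) =
      ∑ x ∈ Finset.univ.map ⟨fun u : (ZMod (2^k))ˣ => (u : ZMod (2^k)), Units.val_injective⟩,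
        (chi8 x.val : ℂ) * ZMod.stdAddChar ((n : ZMod (2^k)) * x) from
    (Finset.sum_map Finset.univ ⟨fun u : (ZMod (2^k))ˣ => (u : ZMod (2^k)), Units.val_injective⟩
      (fun x => (chi8 x.val : ℂ) * ZMod.stdAddChar ((n : ZMod (2^k)) * x))).symm]
  apply Finset.sum_subset (Finset.subset_univ _)
  intro x _ hx
  have hnu : ¬ IsUnit x := by
    intro ⟨u, hu⟩
    exact hx (Finset.mem_map.mpr ⟨u, Finset.mem_univ _, hu⟩)
  have : chi8 x.val = 0 := by
    by_contra hne
    have hodd : x.val % 2 = 1 := by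
      rcases Nat.mod_two_eq_zero_or_one x.val with h | h
      · exact absurd (chi8_even h) hne
      · exact h
    apply hnu
    rw [← ZMod.natCast_zmod_val x]
    rw [ZMod.isUnit_iff_coprime]
    exact Nat.Coprime.pow_right _ (Nat.coprime_comm.mp
      ((Nat.prime_two.coprime_iff_not_dvd).mpr (by omega)))
  rw [this]
  simp

-- the full 2-adic sum
lemma G_eval (k n : ℕ) (hk : 3 ≤ k) [NeZero (2^k)] :
    ∑ u : (ZMod (2^k))ˣ, (chi8 ((u : ZMod (2^k)).val) : ℂ) *
        ZMod.stdAddChar ((n : ZMod (2^k)) * (u : ZMod (2^k))) =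
      (∑ a ∈ range 8, (chi8 a : ℂ) * Complex.exp (2 * Real.pi * Complex.I * n * a / (2^k : ℕ))) *
        (if 2^(k-3) ∣ n then ((2^(k-3) : ℕ) : ℂ) else 0) := by
  haveI : NeZero (2^(k-3)) := ⟨by positivity⟩
  rw [units_to_full k n (by omega)]
  have e1 : ∑ x : ZMod (2^k), (chi8 x.val : ℂ) * ZMod.stdAddChar ((n : ZMod (2^k)) * x) =
      ∑ j ∈ range (2^k), (chi8 j : ℂ) * Complex.exp (2 * Real.pi * Complex.I * n * j / (2^k : ℕ)) := by
    rw [← sum_zmod_eq_sum_range (2^k)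
      (fun j => (chi8 j : ℂ) * Complex.exp (2 * Real.pi * Complex.I * n * j / (2^k : ℕ)))]
    exact Finset.sum_congr rfl fun x _ => by rw [bridge]
  rw [e1]
  set T := 2^(k-3) with hT
  have hkT : 2^k = 8 * T := by rw [hT, show (8:ℕ) = 2^3 from rfl, ← pow_add]; congr 1; omega
  have hTne : (T : ℂ) ≠ 0 := Nat.cast_ne_zero.mpr (NeZero.ne T)
  have e2 : ∑ j ∈ range (2^k), (chi8 j : ℂ) *
        Complex.exp (2 * Real.pi * Complex.I * n * j / (2^k : ℕ)) =
      ∑ p ∈ range 8 ×ˢ range T, (chi8 (p.1 + 8 * p.2) : ℂ) *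
        Complex.exp (2 * Real.pi * Complex.I * n * (p.1 + 8 * p.2 : ℕ) / (2^k : ℕ)) := by
    refine Finset.sum_nbij' (fun j => (j % 8, j / 8)) (fun p => p.1 + 8 * p.2) ?_ ?_ ?_ ?_ ?_
    · intro a ha
      simp only [mem_range, mem_product] at *
      rw [hkT] at ha
      omega
    · intro p hp
      simp only [mem_range, mem_product] at *
      rw [hkT]
      omega
    · intro a _
      dsimp only
      omega
    · intro p hp
      simp only [mem_range, mem_product] at hp
      ext <;> dsimp only <;> omega
    · intro a ha
      simp only [mem_range] at ha
      dsimp only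
      rw [show a % 8 + 8 * (a / 8) = a from by omega]
  rw [e2, Finset.sum_product]
  have e3 : ∀ a ∈ range 8, ∀ b ∈ range T,
      (chi8 (a + 8 * b) : ℂ) *
          Complex.exp (2 * Real.pi * Complex.I * n * (a + 8 * b : ℕ) / (2^k : ℕ)) =
        ((chi8 a : ℂ) * Complex.exp (2 * Real.pi * Complex.I * n * a / (2^k : ℕ))) *
          Complex.exp (2 * Real.pi * Complex.I * n * b / (T : ℕ)) := by
    intro a _ b _
    have hchi : chi8 (a + 8 * b) = chi8 a := by
      rw [← chi8_mod (a + 8*b), ← chi8_mod a]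
      congr 1
      omega
    have h8T : ((2^k : ℕ) : ℂ) = 8 * T := by rw [hkT]; push_cast; ring
    have hexp : Complex.exp (2 * Real.pi * Complex.I * n * (a + 8 * b : ℕ) / (2^k : ℕ)) =
        Complex.exp (2 * Real.pi * Complex.I * n * a / (2^k : ℕ)) *
          Complex.exp (2 * Real.pi * Complex.I * n * b / (T : ℕ)) := by
      rw [← Complex.exp_add]
      congr 1
      rw [h8T]
      push_cast
      field_simp
    rw [hchi, hexp]
    ring
  rw [Finset.sum_congr rfl fun a ha => Finset.sum_congr rfl fun b hb => e3 a ha b hb]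
  rw [← Finset.sum_mul_sum, geomInner T n]

lemma O_eval (k m : ℕ) (hk : 3 ≤ k) :
    ∑ a ∈ range 8, (chi8 a : ℂ) *
        Complex.exp (2 * Real.pi * Complex.I * ((2^(k-3) * m : ℕ) : ℂ) * a / ((2^k : ℕ) : ℂ)) =
      if m % 2 = 1 then (chi8 m : ℂ) * 2 * ((Real.sqrt 2 : ℝ) : ℂ) else 0 := by
  set w := Complex.exp (2 * Real.pi * Complex.I * m / 8) with hw
  have h2k3 : ((2:ℂ))^(k-3) ≠ 0 := pow_ne_zero _ two_ne_zero
  have hsplit : ∀ a ∈ range 8, (chi8 a : ℂ) *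
      Complex.exp (2 * Real.pi * Complex.I * ((2^(k-3) * m : ℕ) : ℂ) * a / ((2^k : ℕ) : ℂ)) =
      (chi8 a : ℂ) * w ^ a := by
    intro a _
    congr 1
    rw [hw, ← Complex.exp_nat_mul]
    congr 1
    have hk8 : ((2^k : ℕ) : ℂ) = 2^(k-3) * 8 := by
      rw [show (2:ℕ)^k = 2^(k-3) * 2^3 from by rw [← pow_add]; congr 1; omega]
      push_cast; ring
    rw [hk8]
    push_cast
    field_simp
  rw [Finset.sum_congr rfl hsplit, quad_sum]
  by_cases hm : m % 2 = 1
  · rw [if_pos hm]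
    set c := Complex.exp (2 * Real.pi * Complex.I / 8) with hc
    have hc8 : c^8 = 1 := by
      rw [show c^8 = ((c^2)^2)^2 from by ring, c_sq, Complex.I_sq]
      norm_num
    have hwc : w = c^(m % 8) := by
      have h1 : w = c^m := by
        rw [hw, hc, ← Complex.exp_nat_mul]
        congr 1
        ring
      rw [h1, show m = 8 * (m / 8) + m % 8 from by omega, pow_add, pow_mul, hc8, one_pow, one_mul]
      congr 1
      omega
    rw [hwc, ← chi8_mod m]
    exact key_odd (m % 8) (by omega) (by omega)
  · rw [if_neg hm]
    have hm2 : (m : ℂ) = 2 * ((m / 2 : ℕ) : ℂ) := by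
      have : m = 2 * (m / 2) := by omega
      exact_mod_cast congrArg (Nat.cast : ℕ → ℂ) this
    have hw4 : w^4 = 1 := by
      rw [hw, ← Complex.exp_nat_mul]
      rw [show (4:ℕ) * (2 * Real.pi * Complex.I * m / 8) = ((m / 2 : ℕ) : ℂ) * (2 * Real.pi * Complex.I) from by
        push_cast
        rw [hm2]
        ring]
      rw [Complex.exp_nat_mul, Complex.exp_two_pi_mul_I, one_pow]
    linear_combination (w^3 - w) * hw4

-- reindexing the 2-adic factor to remove the M⁻¹ twist
lemma F1_eq (k M : ℕ) (hk : 3 ≤ k) [NeZero (2^k)] (hco : Nat.Coprime M (2^k)) (n : ℕ) :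
    (∑ u : (ZMod (2^k))ˣ, (chi8 ((u : ZMod (2^k)).val) : ℂ) *
        ZMod.stdAddChar ((M : ZMod (2^k))⁻¹ * (n : ZMod (2^k)) * (u : ZMod (2^k)))) =
      (chi8 M : ℂ) * ∑ u : (ZMod (2^k))ˣ, (chi8 ((u : ZMod (2^k)).val) : ℂ) *
        ZMod.stdAddChar ((n : ZMod (2^k)) * (u : ZMod (2^k))) := by
  have h8 : (8:ℕ) ∣ 2^k := by
    rw [show (8:ℕ) = 2^3 from rfl]
    exact pow_dvd_pow 2 (by omega)
  set Mu : (ZMod (2^k))ˣ := ZMod.unitOfCoprime M hco with hMu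
  have hMuc : (Mu : ZMod (2^k)) = (M : ZMod (2^k)) := ZMod.coe_unitOfCoprime M hco
  rw [← Equiv.sum_comp (Equiv.mulLeft Mu) (fun u => (chi8 ((u : ZMod (2^k)).val) : ℂ) *
        ZMod.stdAddChar ((M : ZMod (2^k))⁻¹ * (n : ZMod (2^k)) * (u : ZMod (2^k))))]
  rw [Finset.mul_sum]
  refine Fintype.sum_congr _ _ fun u => ?_
  simp only [Equiv.coe_mulLeft, Units.val_mul, hMuc]
  have hval : chi8 (((M : ZMod (2^k)) * (u : ZMod (2^k))).val) =
      chi8 M * chi8 ((u : ZMod (2^k)).val) := by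
    rw [ZMod.val_mul, ← chi8_mod (_ % 2^k), Nat.mod_mod_of_dvd _ h8, chi8_mod, chi8_mul]
    congr 1
    rw [ZMod.val_natCast, ← chi8_mod (M % 2^k), Nat.mod_mod_of_dvd _ h8, chi8_mod]
  have harg : (M : ZMod (2^k))⁻¹ * (n : ZMod (2^k)) * ((M : ZMod (2^k)) * (u : ZMod (2^k))) =
      (n : ZMod (2^k)) * (u : ZMod (2^k)) := by
    have hinv : (M : ZMod (2^k)) * (M : ZMod (2^k))⁻¹ = 1 := ZMod.coe_mul_inv_eq_one M hco
    linear_combination ((n : ZMod (2^k)) * (u : ZMod (2^k))) * hinv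
  rw [hval, harg]
  push_cast
  ring

-- the odd factor
lemma F2_eq (k M : ℕ) (hk : 3 ≤ k) [NeZero M] (hM : Odd M) (n' : ℕ) :
    (∑ v : (ZMod M)ˣ, ZMod.stdAddChar (((2^k : ℕ) : ZMod M)⁻¹ *
        ((2^(k-3) * n' : ℕ) : ZMod M) * (v : ZMod M))) = ramanujanSum M n' := by
  have hc2 : Nat.Coprime 2 M := (Nat.prime_two.coprime_iff_not_dvd).mpr (by
    intro h2; exact (Nat.not_even_iff_odd.mpr hM) ((even_iff_two_dvd).mpr h2))
  have hcok : Nat.Coprime (2^k) M := Nat.Coprime.pow_left _ hc2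
  have hcok3 : Nat.Coprime (2^(k-3)) M := Nat.Coprime.pow_left _ hc2
  set d : (ZMod M)ˣ := (ZMod.unitOfCoprime _ hcok)⁻¹ * ZMod.unitOfCoprime _ hcok3 with hd
  have hdc : (d : ZMod M) = ((2^k : ℕ) : ZMod M)⁻¹ * ((2^(k-3) : ℕ) : ZMod M) := by
    rw [hd, Units.val_mul, ← ZMod.inv_coe_unit, ZMod.coe_unitOfCoprime, ZMod.coe_unitOfCoprime]
  have hram : ramanujanSum M n' = ∑ v : (ZMod M)ˣ, ZMod.stdAddChar ((n' : ZMod M) * (v : ZMod M)) := by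
    rw [ramanujanSum]
    exact Fintype.sum_congr _ _ fun v => bridge M n' _
  rw [hram, ← Equiv.sum_comp (Equiv.mulLeft d) (fun v => ZMod.stdAddChar ((n' : ZMod M) * (v : ZMod M)))]
  refine Fintype.sum_congr _ _ fun v => ?_
  simp only [Equiv.coe_mulLeft, Units.val_mul]
  congr 1
  rw [hdc]
  push_cast
  ring

theorem sigma_eval (k ℓ' ℓ : ℕ) (hk : 3 ≤ k) (hℓ' : Odd ℓ') (hℓ : ℓ = 2 ^ k * ℓ')
    [NeZero ℓ] [NeZero ℓ'] :
    (∀ n : ℕ, 0 < n → padicValNat 2 n ≠ k - 3 → sigmaSum ℓ n = 0) ∧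
    (∀ n' : ℕ, Odd n' →
      sigmaSum ℓ (2 ^ (k - 3) * n') =
        (chi8 (ℓ' * n') : ℂ) * 2 ^ (k - 2) * (Real.sqrt 2 : ℂ) * ramanujanSum ℓ' n') := by
  subst hℓ
  haveI : NeZero (2^k) := ⟨pow_ne_zero _ two_ne_zero⟩
  have hc2 : Nat.Coprime 2 ℓ' := (Nat.prime_two.coprime_iff_not_dvd).mpr (by
    intro h2; exact (Nat.not_even_iff_odd.mpr hℓ') ((even_iff_two_dvd).mpr h2))
  have hco : Nat.Coprime (2^k) ℓ' := Nat.Coprime.pow_left _ hc2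
  have h8 : (8:ℕ) ∣ 2^k := by
    rw [show (8:ℕ) = 2^3 from rfl]; exact pow_dvd_pow 2 (by omega)
  constructor
  · intro n hn hv
    rw [sigma_factor (2^k) ℓ' h8 hco n, F1_eq k ℓ' hk hco.symm n, G_eval k n hk]
    by_cases hdvd : 2^(k-3) ∣ n
    · obtain ⟨m, rfl⟩ := hdvd
      have hm0 : m ≠ 0 := by
        intro h; rw [h, mul_zero] at hn; exact absurd hn (lt_irrefl 0)
      have hmeven : m % 2 = 0 := by
        rcases Nat.mod_two_eq_zero_or_one m with h | h
        · exact h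
        · exfalso
          apply hv
          rw [padicValNat.mul (pow_ne_zero _ two_ne_zero) hm0, padicValNat.prime_pow,
            padicValNat.eq_zero_of_not_dvd (by omega), add_zero]
      rw [O_eval k m hk, if_neg (by omega)]
      ring
    · rw [if_neg hdvd]
      ring
  · intro n' hodd
    rw [sigma_factor (2^k) ℓ' h8 hco _, F1_eq k ℓ' hk hco.symm _, G_eval k _ hk,
      F2_eq k ℓ' hk hℓ' n', O_eval k n' hk, if_pos (Nat.odd_iff.mp hodd),
      if_pos (Dvd.intro n' rfl)]
    rw [chi8_mul]
    have h2 : ((2:ℂ))^(k-2) = ((2^(k-3) : ℕ) : ℂ) * 2 := by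
      push_cast
      rw [← pow_succ]
      congr 1
      omega
    push_cast
    rw [h2]
    push_cast
    ring
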